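/- Let Q be a quandle and C a maximal R-clique of Q with more than one element. Then C, regarded as a quandle in its own right (it is a subquandle of Q), is not connected. -/
import Mathlib


/-- A (right) rack: a set with a binary operation `mul` such that every right
translation `R_x : y ↦ y * x` is a bijection (with inverse given by the right
division `div`), satisfying right self-distributivity. -/
class RightRack (Q : Type*) where
  mul : Q → Q → Q
  div : Q → Q → Q
  div_mul : ∀ x y : Q, mul (div x y) y = x
  mul_div : ∀ x y : Q, div (mul x y) y = x
  self_distrib : ∀ x y z : Q, mul (mul x y) z = mul (mul x z) (mul y z)

namespace RightRack

/-- The right translation `R_x` as a permutation of `Q`. -/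
def rt {Q : Type*} [RightRack Q] (x : Q) : Equiv.Perm Q where
  toFun y := mul y x
  invFun y := div y x
  left_inv y := mul_div y x
  right_inv y := div_mul y x

/-- The right multiplication group `Rmlt(Q)`: the subgroup of the symmetric group
on `Q` generated by all right translations. -/
def rmlt (Q : Type*) [RightRack Q] : Subgroup (Equiv.Perm Q) :=
  Subgroup.closure (Set.range (rt : Q → Equiv.Perm Q))

end RightRack

/-- A quandle: an idempotent rack. -/
class RightQuandle (Q : Type*) extends RightRack Q where
  idem : ∀ x : Q, mul x x = x

/-- The R-commuting relation: `a ∼ b` iff `R_a ∘ R_b = R_b ∘ R_a`. -/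
def rsim {Q : Type*} [RightRack Q] (a b : Q) : Prop :=
  ∀ y : Q, RightRack.mul (RightRack.mul y b) a = RightRack.mul (RightRack.mul y a) b

section Aux
open RightRack
variable {Q : Type*} [RightRack Q]

lemma rt_apply (x y : Q) : rt x y = mul y x := rfl
lemma rt_inv_apply (x y : Q) : (rt x)⁻¹ y = div y x := rfl

lemma rt_key (x c : Q) : rt c * rt x = rt (mul x c) * rt c := by
  ext y
  simp only [Equiv.Perm.mul_apply, rt_apply]
  exact self_distrib y x c

lemma rt_mul_of_comm {x c : Q} (h : rt x * rt c = rt c * rt x) :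
    rt (mul x c) = rt x := by
  have := rt_key x c
  rw [← h] at this
  exact mul_right_cancel this.symm

lemma rt_div_of_comm {x c : Q} (h : rt x * rt c = rt c * rt x) :
    rt (div x c) = rt x := by
  have hk := rt_key (div x c) c
  rw [RightRack.div_mul, h] at hk
  exact mul_left_cancel hk

lemma rsim_comm {a b : Q} (h : rsim a b) : rt a * rt b = rt b * rt a := by
  ext y
  simp only [Equiv.Perm.mul_apply, rt_apply]
  exact h y

end Aux

section Main
open RightRack

/-- elements of the closure preserve the set `{x | rt x = rt a}`. -/
lemma closure_preserves {Q : Type*} [RightQuandle Q] (C : Set Q)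
    (hC : ∀ a ∈ C, ∀ b ∈ C, rsim a b) {a : Q} (ha : a ∈ C)
    {g : Equiv.Perm Q} (hg : g ∈ Subgroup.closure ((rt : Q → Equiv.Perm Q) '' C)) :
    ∀ x : Q, rt x = rt a → rt (g x) = rt a ∧ rt (g⁻¹ x) = rt a := by
  let K : Subgroup (Equiv.Perm Q) :=
    { carrier := {g | ∀ x : Q, rt x = rt a → rt (g x) = rt a ∧ rt (g⁻¹ x) = rt a}
      one_mem' := fun x hx => ⟨hx, hx⟩
      mul_mem' := by
        intro p q hp hq x hx
        refine ⟨?_, ?_⟩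
        · have h1 := (hq x hx).1
          have h2 := (hp _ h1).1
          simpa using h2
        · have h1 := (hp x hx).2
          have h2 := (hq _ h1).2
          simpa using h2
      inv_mem' := by
        intro p hp x hx
        refine ⟨(hp x hx).2, ?_⟩
        simpa using (hp x hx).1 }
  have hle : Subgroup.closure ((rt : Q → Equiv.Perm Q) '' C) ≤ K := by
    apply Subgroup.closure_le K |>.2
    rintro _ ⟨c, hc, rfl⟩ x hx
    have hcomm : rt x * rt c = rt c * rt x := by
      rw [hx]; exact rsim_comm (hC a ha c hc)
    constructor
    · rw [rt_apply, rt_mul_of_comm hcomm, hx]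
    · rw [rt_inv_apply, rt_div_of_comm hcomm, hx]
  exact hle hg


/-- Let `Q` be a quandle and `C` a maximal R-clique of `Q` with more than one
element. Then `C`, regarded as a quandle in its own right (it is a subquandle of
`Q`, closed under `*` and `/`, so its right multiplication group is generated by
the right translations by elements of `C`, restricted to `C`), is not connected:
the subgroup of the symmetric group on `Q` generated by the right translations
`R_c`, `c ∈ C`, does not act transitively on `C`. -/
theorem maximal_rclique_not_connected {Q : Type*} [RightQuandle Q]
    (C : Set Q) (hC : ∀ a ∈ C, ∀ b ∈ C, rsim a b)
    (hmax : ∀ D : Set Q, (∀ a ∈ D, ∀ b ∈ D, rsim a b) → C ⊆ D → D = C)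
    (hbig : ∃ a ∈ C, ∃ b ∈ C, a ≠ b) :
    ¬ (∀ a ∈ C, ∀ b ∈ C,
        ∃ g ∈ Subgroup.closure ((RightRack.rt : Q → Equiv.Perm Q) '' C), g a = b) := by
  intro h
  obtain ⟨a, ha, b, hb, hab⟩ := hbig
  -- all elements of C have the same right translation as a
  have hrt : ∀ c ∈ C, rt c = rt a := by
    intro c hc
    obtain ⟨g, hg, hga⟩ := h a ha c hc
    have := (closure_preserves C hC ha hg a rfl).1
    rwa [hga] at this
  -- every element of the closure fixes a
  have hfix : ∀ g ∈ Subgroup.closure ((rt : Q → Equiv.Perm Q) '' C),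
      g a = a ∧ g⁻¹ a = a := by
    let K : Subgroup (Equiv.Perm Q) :=
      { carrier := {g | g a = a ∧ g⁻¹ a = a}
        one_mem' := ⟨rfl, rfl⟩
        mul_mem' := by
          rintro p q ⟨hp1, hp2⟩ ⟨hq1, hq2⟩
          constructor
          · show p (q a) = a; rw [hq1, hp1]
          · show q⁻¹ (p⁻¹ a) = a; rw [hp2, hq2]
        inv_mem' := by
          rintro p ⟨hp1, hp2⟩
          exact ⟨hp2, by simpa using hp1⟩ }
    intro g hg
    refine (Subgroup.closure_le K |>.2 ?_) hg
    rintro _ ⟨c, hc, rfl⟩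
    have hmulac : mul a c = a := by
      have : rt c a = rt a a := by rw [hrt c hc]
      simpa [rt_apply, RightQuandle.idem] using this
    constructor
    · exact hmulac
    · show div a c = a
      apply (rt c).injective
      show rt c (div a c) = rt c a
      rw [rt_apply, rt_apply, RightRack.div_mul, hmulac]
  obtain ⟨g, hg, hgab⟩ := h a ha b hb
  exact hab (((hfix g hg).1.symm.trans hgab))

end Main
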